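/- Let s_1, …, s_n be nondegenerate segments in [a,b] with pairwise disjoint interiors, let r ≤ n, and let u_1, …, u_r be linearly independent polynomials in ℙ_{r−1}. Then the n×r matrix N = (μ_{s_i}(u_j))_{1≤i≤n, 1≤j≤r} has rank r, i.e., its columns are linearly independent. -/
import Mathlib


open Real Set Polynomial

/-- Segmental average: `μ_[a,b](f) = (b-a)⁻¹ ∫_a^b f`. -/
noncomputable def segAvg (a b : ℝ) (f : ℝ → ℝ) : ℝ := (b - a)⁻¹ * ∫ x in a..b, f x

/-- A continuous function whose integral over a nondegenerate interval vanishes has a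
root in the open interval. -/
lemma exists_root_of_integral_eq_zero (f : ℝ → ℝ) (hf : Continuous f) {α β : ℝ}
    (hab : α < β) (hint : (∫ x in α..β, f x) = 0) : ∃ x ∈ Set.Ioo α β, f x = 0 := by
  by_contra h
  push_neg at h
  set m := (α + β) / 2 with hm
  have hmem : m ∈ Set.Ioo α β := ⟨by linarith, by linarith⟩
  have hsign : (∀ x ∈ Set.Ioo α β, 0 < f x) ∨ (∀ x ∈ Set.Ioo α β, f x < 0) := by
    rcases (h m hmem).lt_or_gt with hneg | hpos
    · right
      intro x hx
      rcases (h x hx).lt_or_gt with h1 | h1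
      · exact h1
      · exfalso
        have hsub : Set.uIcc x m ⊆ Set.Ioo α β :=
          Set.ordConnected_Ioo.uIcc_subset hx hmem
        have h0 : (0 : ℝ) ∈ Set.uIcc (f x) (f m) :=
          Set.mem_uIcc.mpr (Or.inr ⟨le_of_lt hneg, le_of_lt h1⟩)
        obtain ⟨c, hc, hc0⟩ := intermediate_value_uIcc (f := f) hf.continuousOn h0
        exact h c (hsub hc) hc0
    · left
      intro x hx
      rcases (h x hx).lt_or_gt with h1 | h1
      · exfalso
        have hsub : Set.uIcc x m ⊆ Set.Ioo α β :=
          Set.ordConnected_Ioo.uIcc_subset hx hmem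
        have h0 : (0 : ℝ) ∈ Set.uIcc (f x) (f m) :=
          Set.mem_uIcc.mpr (Or.inl ⟨le_of_lt h1, le_of_lt hpos⟩)
        obtain ⟨c, hc, hc0⟩ := intermediate_value_uIcc (f := f) hf.continuousOn h0
        exact h c (hsub hc) hc0
      · exact h1
  rcases hsign with hpos | hneg
  · have := intervalIntegral.intervalIntegral_pos_of_pos_on (f := f)
      (hf.intervalIntegrable α β) hpos hab
    rw [hint] at this; exact lt_irrefl 0 this
  · have := intervalIntegral.intervalIntegral_pos_of_pos_on (f := fun x => -f x)
      ((hf.neg).intervalIntegrable α β) (fun x hx => by simpa using (hneg x hx)) hab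
    rw [intervalIntegral.integral_neg, hint, neg_zero] at this
    exact lt_irrefl 0 this

/-- Full column rank of the interpolation matrix: for `r ≤ n` segments with pairwise
disjoint interiors and linearly independent polynomials `u_1, …, u_r ∈ ℙ_{r-1}`, the
`n × r` matrix `(μ_{s_i}(u_j))` has rank `r`. -/
theorem stmt_14 (a b : ℝ) (n r : ℕ) (hrn : r ≤ n)
    (lo hi : Fin n → ℝ)
    (hseg : ∀ i, lo i < hi i)
    (hsub : ∀ i, Set.Icc (lo i) (hi i) ⊆ Set.Icc a b)
    (hdisj : ∀ i j, i ≠ j → Set.Ioo (lo i) (hi i) ∩ Set.Ioo (lo j) (hi j) = ∅)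
    (u : Fin r → Polynomial ℝ)
    (hu : ∀ j, u j ∈ Polynomial.degreeLT ℝ r)
    (huli : LinearIndependent ℝ u) :
    (Matrix.of fun (i : Fin n) (j : Fin r) =>
      segAvg (lo i) (hi i) fun x => (u j).eval x).rank = r := by
  classical
  set M : Matrix (Fin n) (Fin r) ℝ := Matrix.of fun (i : Fin n) (j : Fin r) =>
      segAvg (lo i) (hi i) fun x => (u j).eval x with hM
  have hinj : Function.Injective M.mulVecLin := by
    rw [← LinearMap.ker_eq_bot, LinearMap.ker_eq_bot']
    intro c hc
    -- the combined polynomial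
    set p : Polynomial ℝ := ∑ j, c j • u j with hp
    have hpeval : ∀ x : ℝ, p.eval x = ∑ j, c j * (u j).eval x := by
      intro x
      simp [hp, Polynomial.eval_finset_sum]
    -- integral of p over each segment vanishes
    have hintzero : ∀ i, (∫ x in (lo i)..(hi i), p.eval x) = 0 := by
      intro i
      have hci : M.mulVec c i = 0 := congrFun hc i
      have hrow : M.mulVec c i
          = (hi i - lo i)⁻¹ * ∫ x in (lo i)..(hi i), p.eval x := by
        have : (∫ x in (lo i)..(hi i), p.eval x)
            = ∑ j, c j * ∫ x in (lo i)..(hi i), (u j).eval x := by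
          rw [show (fun x => p.eval x) = fun x => ∑ j, c j * (u j).eval x from
            funext hpeval]
          rw [intervalIntegral.integral_finset_sum]
          · exact Finset.sum_congr rfl fun j _ => intervalIntegral.integral_const_mul _ _
          · intro j _
            exact ((continuous_const.mul ((u j).continuous))|>.intervalIntegrable _ _)
        rw [Matrix.mulVec, this, Finset.mul_sum]
        refine Finset.sum_congr rfl fun j _ => ?_
        simp [hM, segAvg, dotProduct]
        ring
      have hne : (hi i - lo i)⁻¹ ≠ 0 := inv_ne_zero (sub_ne_zero.mpr (hseg i).ne')
      have := hrow ▸ hci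
      exact (mul_eq_zero.mp this.symm.symm).resolve_left hne
    -- p = 0
    have hpz : p = 0 := by
      rcases Nat.eq_zero_or_pos r with hr0 | hrpos
      · subst hr0; simp [hp]
      · have hroot : ∀ i, ∃ x ∈ Set.Ioo (lo i) (hi i), p.eval x = 0 := fun i =>
          exists_root_of_integral_eq_zero _ (p.continuous) (hseg i) (hintzero i)
        choose x hxmem hxroot using hroot
        have hxinj : Function.Injective x := by
          intro i j hij
          by_contra hne
          have := hdisj i j hne
          have : x i ∈ Set.Ioo (lo i) (hi i) ∩ Set.Ioo (lo j) (hi j) :=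
            ⟨hxmem i, hij ▸ hxmem j⟩
          simp_all
        refine Polynomial.eq_zero_of_natDegree_lt_card_of_eval_eq_zero p hxinj hxroot ?_
        have hdlt : p.natDegree < r := by
          rcases eq_or_ne p 0 with h0 | h0
          · simpa [h0] using hrpos
          · have : p ∈ Polynomial.degreeLT ℝ r :=
              Submodule.sum_mem _ fun j _ => Submodule.smul_mem _ _ (hu j)
            rw [Polynomial.mem_degreeLT] at this
            exact (Polynomial.natDegree_lt_iff_degree_lt h0).mpr this
        simpa using lt_of_lt_of_le hdlt hrn
    -- conclude c = 0 by linear independence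
    have := (Fintype.linearIndependent_iff.mp huli) c (by rw [← hp, hpz])
    funext j; exact this j
  have : M.rank = Module.finrank ℝ (Fin r → ℝ) := by
    rw [Matrix.rank, LinearMap.finrank_range_of_inj hinj]
  rw [this, Module.finrank_pi, Fintype.card_fin]
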